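/- Let (𝔤*, [·,·], a) be a Lie algebra with nondegenerate symmetric bilinear form a, and let A be its infinitesimal Levi-Civita connection. On the Lie algebra 𝔤* ⋉ 𝔤* with bracket [(α,β),(α',β')] = ([α,β'] + [β,α'], [β,β']), equip the complete lift form a^c defined by a^c((α,β),(α',β')) = a(α,β') + a(β,α'). Then a^c is a symmetric nondegenerate bilinear form, and the infinitesimal Levi-Civita connection B of ([·,·]_{𝔤*⋉𝔤*}, a^c) is given by B_{(α,β)}(α',β') = (A_α β' + A_β α', A_β β'). -/
import Mathlib


/-- On `𝔤* ⋉ 𝔤*` with the bracket `[(α,β),(α',β')] = ([α,β'] + [β,α'], [β,β'])`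
and the complete lift form `a^c((α,β),(α',β')) = a(α,β') + a(β,α')`, the form
`a^c` is symmetric and nondegenerate, and the map
`B_{(α,β)}(α',β') = (A_α β' + A_β α', A_β β')` satisfies the Koszul formula,
i.e. it is the infinitesimal Levi-Civita connection of `([·,·]_{⋉}, a^c)`. -/
theorem lifted_levi_civita_connection
    (L : Type*) [LieRing L] [LieAlgebra ℝ L]
    (a : L →ₗ[ℝ] L →ₗ[ℝ] ℝ)
    (hsymm : ∀ x y, a x y = a y x)
    (hnd : ∀ x, (∀ y, a x y = 0) → x = 0)
    (A : L →ₗ[ℝ] L →ₗ[ℝ] L)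
    (hK : ∀ α β γ, 2 * a (A α β) γ = a ⁅α, β⁆ γ + a ⁅γ, α⁆ β + a ⁅γ, β⁆ α) :
    let br : L × L → L × L → L × L :=
      fun p q => (⁅p.1, q.2⁆ + ⁅p.2, q.1⁆, ⁅p.2, q.2⁆)
    let ac : L × L → L × L → ℝ := fun p q => a p.1 q.2 + a p.2 q.1
    let B : L × L → L × L → L × L :=
      fun p q => (A p.1 q.2 + A p.2 q.1, A p.2 q.2)
    (∀ p q, ac p q = ac q p) ∧
    (∀ p, (∀ q, ac p q = 0) → p = 0) ∧
    (∀ p q r, 2 * ac (B p q) r = ac (br p q) r + ac (br r p) q + ac (br r q) p) := by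
  intro br ac B
  refine ⟨fun p q => by simp [ac]; rw [hsymm p.1 q.2, hsymm p.2 q.1]; ring, ?_, ?_⟩
  · intro p hp
    have h1 : p.1 = 0 := hnd _ (fun y => by have := hp (0, y); simpa [ac] using this)
    have h2 : p.2 = 0 := hnd _ (fun y => by have := hp (y, 0); simpa [ac] using this)
    exact Prod.ext h1 h2
  · intro p q r
    obtain ⟨α, β⟩ := p; obtain ⟨α', β'⟩ := q; obtain ⟨δ, δ'⟩ := r
    simp only [ac, br, B, map_add, LinearMap.add_apply]
    have h1 := hK α β' δ'
    have h2 := hK β α' δ'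
    have h3 := hK β β' δ
    have s1 := hsymm ⁅δ', α⁆ β'
    have s2 := hsymm ⁅δ', β'⁆ α
    have s3 := hsymm ⁅δ', β⁆ α'
    have s4 := hsymm ⁅δ', α'⁆ β
    have s5 := hsymm ⁅δ, β⁆ β'
    have s6 := hsymm ⁅δ, β'⁆ β
    linarith
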